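/- Let λ > -1/2 be a real number. For every integer k ≥ 1, (Γ(2k+1)·(2k+λ)/Γ(2k+2λ)) · ∑_{j=1}^{k} (2j+λ-1)·Γ(2j+2λ-1)/Γ(2j) = 2k(k+λ)(2k+λ)/(2λ+1). -/

import Mathlib

lemma sum_alpha_sq (lam : ℝ) (hlam : lam > -1/2) :
    ∀ k : ℕ, 1 ≤ k →
    ∑ j ∈ Finset.Icc 1 k,
        (2*(j : ℝ) + lam - 1) * Real.Gamma (2*(j : ℝ) + 2*lam - 1) / Real.Gamma (2*(j : ℝ))
      = 2*(k : ℝ)*((k : ℝ) + lam) * Real.Gamma (2*(k : ℝ) + 2*lam)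
        / ((2*lam + 1) * Real.Gamma (2*(k : ℝ) + 1)) := by
  have h1 : (2*lam + 1 : ℝ) > 0 := by linarith
  intro k hk
  induction k, hk using Nat.le_induction with
  | base =>
      rw [Finset.Icc_self, Finset.sum_singleton]
      push_cast
      have e1 : (2*(1:ℝ) + 2*lam - 1) = (2*lam) + 1 := by ring
      have e2 : (2*(1:ℝ) + 2*lam) = (2*lam + 1) + 1 := by ring
      have e3 : (2*(1:ℝ) + 1) = (2:ℝ) + 1 := by ring
      rw [e1, e2, e3, Real.Gamma_add_one (s := 2*lam + 1) (by linarith),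
        Real.Gamma_add_one (s := 2) (by norm_num), Real.Gamma_two]
      have : Real.Gamma (2*(1:ℝ)) = 1 := by norm_num [Real.Gamma_two]
      rw [this]
      field_simp
      ring
  | succ n hn ih =>
      rw [Finset.sum_Icc_succ_top (by omega : 1 ≤ n + 1), ih]
      have hn1 : (1:ℝ) ≤ (n:ℝ) := by exact_mod_cast hn
      have hx : (2*(n:ℝ) + 2*lam) > 0 := by linarith
      have hGx : Real.Gamma (2*(n:ℝ) + 2*lam) > 0 := Real.Gamma_pos_of_pos hx
      have hGn : Real.Gamma (2*(n:ℝ) + 1) > 0 :=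
        Real.Gamma_pos_of_pos (by linarith)
      push_cast
      have e1 : (2*((n:ℝ)+1) + 2*lam - 1) = (2*(n:ℝ) + 2*lam) + 1 := by ring
      have e2 : (2*((n:ℝ)+1) + 2*lam) = ((2*(n:ℝ) + 2*lam) + 1) + 1 := by ring
      have e3 : (2*((n:ℝ)+1)) = (2*(n:ℝ) + 1) + 1 := by ring
      rw [e1, e2, e3,
        Real.Gamma_add_one (s := 2*(n:ℝ) + 2*lam + 1) (by linarith),
        Real.Gamma_add_one (s := 2*(n:ℝ) + 2*lam) (by linarith),
        Real.Gamma_add_one (s := 2*(n:ℝ) + 1 + 1) (by linarith),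
        Real.Gamma_add_one (s := 2*(n:ℝ) + 1) (by linarith)]
      field_simp
      ring

/-- Lemma 2.1 (ii): `β_k² ∑_{j=1}^k α_j² = 2k(k+λ)(2k+λ)/(2λ+1)`. -/
theorem beta_sq_mul_sum_alpha_sq (lam : ℝ) (hlam : lam > -1/2) (k : ℕ) (hk : 1 ≤ k) :
    (Real.Gamma (2*(k : ℝ) + 1) * (2*(k : ℝ) + lam) / Real.Gamma (2*(k : ℝ) + 2*lam)) *
      ∑ j ∈ Finset.Icc 1 k,
        (2*(j : ℝ) + lam - 1) * Real.Gamma (2*(j : ℝ) + 2*lam - 1) / Real.Gamma (2*(j : ℝ))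
      = 2*(k : ℝ)*((k : ℝ) + lam)*(2*(k : ℝ) + lam) / (2*lam + 1) := by
  rw [sum_alpha_sq lam hlam k hk]
  have hk1 : (1:ℝ) ≤ (k:ℝ) := by exact_mod_cast hk
  have hGx : Real.Gamma (2*(k:ℝ) + 2*lam) > 0 := Real.Gamma_pos_of_pos (by linarith)
  have hGn : Real.Gamma (2*(k:ℝ) + 1) > 0 := Real.Gamma_pos_of_pos (by linarith)
  have h1 : (2*lam + 1 : ℝ) > 0 := by linarith
  have hGx0 : Real.Gamma (2*(k:ℝ) + 2*lam) ≠ 0 := hGx.ne'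
  field_simp
  linear_combination (2*(k:ℝ)^2 + 3*(k:ℝ)*lam + lam^2) * mul_inv_cancel₀ (show Real.Gamma (2*((k:ℝ)+lam)) ≠ 0 by rw [mul_add]; exact hGx0)
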